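/- A closed densely defined operator X from H0 to H1 is a weak solution of the Riccati equation A1 X - X A0 - X V X + V* = 0 if and only if the graph subspace G(H0, X) = {x ⊕ Xx : x in Dom(X)} is invariant for the operator B, i.e., B maps G(H0,X) into itself. -/

import Mathlib

open scoped ComplexInnerProductSpace

lemma mem_graph_of_adjoint_rel {H0 H1 : Type*}
    [NormedAddCommGroup H0] [InnerProductSpace ℂ H0] [CompleteSpace H0]
    [NormedAddCommGroup H1] [InnerProductSpace ℂ H1] [CompleteSpace H1]
    (X : H0 →ₗ.[ℂ] H1)
    (hdense : Dense (X.domain : Set H0))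
    (hclosed : IsClosed (X.graph : Set (H0 × H1)))
    (a : H0) (b : H1)
    (h : ∀ y : X.adjoint.domain, ⟪X.adjoint y, a⟫ = ⟪(y : H1), b⟫) :
    (a, b) ∈ X.graph := by
  classical
  set e := WithLp.linearEquiv 2 ℂ (H0 × H1)
  set K : Submodule ℂ (WithLp 2 (H0 × H1)) := X.graph.comap (e : WithLp 2 (H0 × H1) →ₗ[ℂ] H0 × H1)
    with hK
  have hKclosed : IsClosed (K : Set (WithLp 2 (H0 × H1))) := by
    have : (K : Set (WithLp 2 (H0 × H1))) =
        (WithLp.prodContinuousLinearEquiv 2 ℂ H0 H1) ⁻¹' (X.graph : Set (H0 × H1)) := rfl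
    rw [this]
    exact hclosed.preimage (WithLp.prodContinuousLinearEquiv 2 ℂ H0 H1).continuous
  have horth : Kᗮᗮ = K := by
    rw [Submodule.orthogonal_orthogonal_eq_closure, hKclosed.submodule_topologicalClosure_eq]
  have hmem : (WithLp.equiv 2 (H0 × H1)).symm (a, b) ∈ Kᗮᗮ := by
    intro z hz
    have hz' : ∀ x : X.domain, ⟪-z.fst, (x : H0)⟫ = ⟪z.snd, X x⟫ := by
      intro x
      have hxK : (WithLp.equiv 2 (H0 × H1)).symm ((x : H0), X x) ∈ K := X.mem_graph x
      have h0 := hz _ hxK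
      rw [WithLp.prod_inner_apply] at h0
      simp only [WithLp.equiv_symm_apply, WithLp.ofLp_toLp, WithLp.ofLp_fst, WithLp.ofLp_snd] at h0
      have h1 := congrArg (starRingEnd ℂ) h0
      simp only [map_add, inner_conj_symm, map_zero] at h1
      rw [inner_neg_left]
      linear_combination -h1
    have hz2 : z.snd ∈ X.adjoint.domain :=
      LinearPMap.mem_adjoint_domain_of_exists (T := X) z.snd ⟨-z.fst, hz'⟩
    have hz3 : X.adjoint ⟨z.snd, hz2⟩ = -z.fst :=
      LinearPMap.adjoint_apply_eq hdense ⟨z.snd, hz2⟩ hz'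
    have hb := h ⟨z.snd, hz2⟩
    rw [hz3, inner_neg_left] at hb
    rw [WithLp.prod_inner_apply]
    simp only [WithLp.equiv_symm_apply, WithLp.ofLp_toLp, WithLp.ofLp_fst, WithLp.ofLp_snd]
    linear_combination -hb
  rw [horth] at hmem
  exact hmem

/-- A closed densely defined operator `X` from `H₀` to `H₁` is a weak solution
of the Riccati equation `A₁ X - X A₀ - X V X + V* = 0` iff the graph subspace
`G(H₀, X) = {x ⊕ X x : x ∈ Dom X}` is invariant for the block operator
`B (x₀ ⊕ x₁) = (A₀ x₀ + V x₁) ⊕ (V* x₀ + A₁ x₁)`. -/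
theorem weak_solution_riccati_iff_graph_invariant
    {H0 H1 : Type*}
    [NormedAddCommGroup H0] [InnerProductSpace ℂ H0] [CompleteSpace H0]
    [TopologicalSpace.SeparableSpace H0]
    [NormedAddCommGroup H1] [InnerProductSpace ℂ H1] [CompleteSpace H1]
    [TopologicalSpace.SeparableSpace H1]
    (A0 : H0 →L[ℂ] H0) (A1 : H1 →L[ℂ] H1) (V : H1 →L[ℂ] H0)
    (hA0 : IsSelfAdjoint A0) (hA1 : IsSelfAdjoint A1)
    (B : H0 × H1 →L[ℂ] H0 × H1)
    (hB : ∀ u : H0 × H1, B u = (A0 u.1 + V u.2, ContinuousLinearMap.adjoint V u.1 + A1 u.2))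
    (X : H0 →ₗ.[ℂ] H1)
    (hdense : Dense (X.domain : Set H0))
    (hclosed : IsClosed (X.graph : Set (H0 × H1))) :
    -- weak solution
    (∀ (x : X.domain) (y : X.adjoint.domain),
        ⟪A1 (y : H1), X x⟫ - ⟪X.adjoint y, A0 (x : H0)⟫ - ⟪X.adjoint y, V (X x)⟫
          + ⟪V (y : H1), (x : H0)⟫ = 0) ↔
    -- the graph subspace is `B`-invariant
    (∀ u ∈ X.graph, B u ∈ X.graph) := by
  constructor
  · -- weak solution → invariance
    intro hweak u hu
    rw [LinearPMap.mem_graph_iff] at hu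
    obtain ⟨x, hx1, hx2⟩ := hu
    rw [hB]
    rw [← hx1, ← hx2]
    apply mem_graph_of_adjoint_rel X hdense hclosed
    intro y
    have h0 := hweak x y
    have h1 : ⟪(y : H1), ContinuousLinearMap.adjoint V (x : H0)⟫ = ⟪V (y : H1), (x : H0)⟫ :=
      ContinuousLinearMap.adjoint_inner_right V _ _
    have h2 : ⟪(y : H1), A1 (X x)⟫ = ⟪A1 (y : H1), X x⟫ := (hA1.isSymmetric _ _).symm
    rw [inner_add_right, inner_add_right, h1, h2]
    linear_combination -h0
  · -- invariance → weak solution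
    intro hinv x y
    have hu := hinv _ (X.mem_graph x)
    rw [hB] at hu
    rw [LinearPMap.mem_graph_iff] at hu
    obtain ⟨x', hx1, hx2⟩ := hu
    simp only at hx1 hx2
    have hform := LinearPMap.adjoint_isFormalAdjoint hdense (T := X) y x'
    rw [hx2] at hform
    rw [hx1, inner_add_right, inner_add_right] at hform
    have h1 : ⟪(y : H1), ContinuousLinearMap.adjoint V (x : H0)⟫ = ⟪V (y : H1), (x : H0)⟫ :=
      ContinuousLinearMap.adjoint_inner_right V _ _
    have h2 : ⟪(y : H1), A1 (X x)⟫ = ⟪A1 (y : H1), X x⟫ := (hA1.isSymmetric _ _).symm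
    rw [h1, h2] at hform
    linear_combination -hform
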